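/- Let H be a finite-dimensional real inner product space and let A, B : H → H be linear, self-adjoint, positive definite operators. If u : [0,T] → H is continuously differentiable and satisfies B u'(t) + A u(t) = f(t) for all t ∈ (0,T], then for all t ∈ [0,T], (A u(t), u(t)) ≤ (A u(0), u(0)) + (1/2) ∫₀ᵗ (B⁻¹ f(θ), f(θ)) dθ. -/

import Mathlib

open scoped RealInnerProductSpace

/-- A priori energy estimate for the continuous problem B u' + A u = f. -/
theorem stmt0 {H : Type*} [NormedAddCommGroup H] [InnerProductSpace ℝ H]
    [FiniteDimensional ℝ H]
    (A B Binv : H →ₗ[ℝ] H)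
    (hAsym : A.IsSymmetric) (hApos : ∀ x : H, x ≠ 0 → 0 < ⟪A x, x⟫)
    (hBsym : B.IsSymmetric) (hBpos : ∀ x : H, x ≠ 0 → 0 < ⟪B x, x⟫)
    (hBinv₁ : B ∘ₗ Binv = LinearMap.id) (hBinv₂ : Binv ∘ₗ B = LinearMap.id)
    (T : ℝ) (hT : 0 < T)
    (u u' f : ℝ → H)
    (hu : ∀ t ∈ Set.Icc (0:ℝ) T, HasDerivAt u (u' t) t)
    (hu' : ContinuousOn u' (Set.Icc (0:ℝ) T))
    (hf : ContinuousOn f (Set.Icc (0:ℝ) T))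
    (heq : ∀ t ∈ Set.Ioc (0:ℝ) T, B (u' t) + A (u t) = f t) :
    ∀ t ∈ Set.Icc (0:ℝ) T,
      ⟪A (u t), u t⟫ ≤ ⟪A (u 0), u 0⟫
        + (1/2) * ∫ θ in (0:ℝ)..t, ⟪Binv (f θ), f θ⟫ := by
  have hB1 : ∀ x, B (Binv x) = x := fun x => LinearMap.congr_fun hBinv₁ x
  have hB2 : ∀ x, Binv (B x) = x := fun x => LinearMap.congr_fun hBinv₂ x
  have hBinvsym : ∀ x y : H, ⟪Binv x, y⟫ = ⟪x, Binv y⟫ := by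
    intro x y
    calc ⟪Binv x, y⟫ = ⟪Binv x, B (Binv y)⟫ := by rw [hB1 y]
    _ = ⟪B (Binv x), Binv y⟫ := (hBsym _ _).symm
    _ = ⟪x, Binv y⟫ := by rw [hB1 x]
  have hBinvpos : ∀ x : H, 0 ≤ ⟪Binv x, x⟫ := by
    intro x
    have : ⟪Binv x, x⟫ = ⟪B (Binv x), Binv x⟫ := by
      nth_rewrite 2 [← hB1 x]
      rw [real_inner_comm]
    rw [this]
    rcases eq_or_ne (Binv x) 0 with h | h
    · simp [h]
    · exact (hBpos _ h).le
  -- key Young-type inequality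
  have key : ∀ v w : H, 2*⟪Binv v, w⟫ ≤ 2*⟪Binv v, v⟫ + (1/2)*⟪Binv w, w⟫ := by
    intro v w
    have h0 := hBinvpos ((2:ℝ) • v - w)
    have hc : ⟪Binv w, v⟫ = ⟪Binv v, w⟫ := by
      rw [hBinvsym w v, real_inner_comm]
    simp only [map_sub, map_smul, inner_sub_left, inner_sub_right,
      real_inner_smul_left, real_inner_smul_right] at h0
    linarith
  set g : ℝ → ℝ := fun θ => ⟪Binv (f θ), f θ⟫ with hg_def
  have hgcont : ContinuousOn g (Set.Icc 0 T) := by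
    apply ContinuousOn.inner
    · exact (LinearMap.toContinuousLinearMap Binv).continuous.comp_continuousOn hf
    · exact hf
  set G : ℝ → ℝ := fun τ => ∫ θ in (0:ℝ)..τ, g θ with hG_def
  have hGcont : ContinuousOn G (Set.Icc 0 T) := by
    have : Set.Icc (0:ℝ) T = Set.uIcc 0 T := (Set.uIcc_of_le hT.le).symm
    rw [this] at hgcont ⊢
    exact intervalIntegral.continuousOn_primitive_interval
      (hgcont.integrableOn_uIcc)
  set E : ℝ → ℝ := fun τ => ⟪A (u τ), u τ⟫ with hE_def
  have hEderiv : ∀ s ∈ Set.Icc (0:ℝ) T,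
      HasDerivAt E (2 * ⟪A (u s), u' s⟫) s := by
    intro s hs
    have hus := hu s hs
    have hAu : HasDerivAt (fun τ => A (u τ)) (A (u' s)) s :=
      (LinearMap.toContinuousLinearMap A).hasFDerivAt.comp_hasDerivAt s hus
    have := hAu.inner (𝕜 := ℝ) hus
    have hsw : ⟪A (u' s), u s⟫ = ⟪A (u s), u' s⟫ := by
      rw [hAsym, real_inner_comm]
    have h2 : (2 * ⟪A (u s), u' s⟫) = ⟪A (u s), u' s⟫ + ⟪A (u' s), u s⟫ := by
      rw [hsw]; ring
    rw [h2]; exact this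
  have hEcont : ContinuousOn E (Set.Icc 0 T) := fun s hs =>
    ((hEderiv s hs).continuousAt).continuousWithinAt
  set φ : ℝ → ℝ := fun τ => E τ - (1/2) * G τ with hφ_def
  have hφcont : ContinuousOn φ (Set.Icc 0 T) :=
    hEcont.sub (continuousOn_const.mul hGcont)
  -- derivative of φ on interior, nonpositive
  have hφderiv : ∀ s ∈ Set.Ioo (0:ℝ) T,
      HasDerivAt φ (2 * ⟪A (u s), u' s⟫ - (1/2) * g s) s := by
    intro s hs
    have hs' : s ∈ Set.Icc (0:ℝ) T := Set.mem_Icc.2 ⟨hs.1.le, hs.2.le⟩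
    have hGd : HasDerivAt G (g s) s := by
      apply intervalIntegral.integral_hasDerivAt_right
      · exact (hgcont.mono (Set.Icc_subset_Icc le_rfl hs.2.le)).intervalIntegrable_of_Icc hs.1.le
      · exact (hgcont.mono Set.Ioo_subset_Icc_self).stronglyMeasurableAtFilter
          isOpen_Ioo s hs
      · exact (hgcont.continuousAt (Icc_mem_nhds hs.1 hs.2))
    exact (hEderiv s hs').sub (hGd.const_mul (1/2))
  have hφle : ∀ s ∈ Set.Ioo (0:ℝ) T,
      2 * ⟪A (u s), u' s⟫ - (1/2) * g s ≤ 0 := by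
    intro s hs
    have hsIoc : s ∈ Set.Ioc (0:ℝ) T := ⟨hs.1, hs.2.le⟩
    have hBu : B (u' s) = f s - A (u s) := by
      have := heq s hsIoc
      rw [← this]; abel
    have hu's : u' s = Binv (f s) - Binv (A (u s)) := by
      rw [← map_sub, ← hBu, hB2]
    set v := A (u s)
    set w := f s
    have h1 : ⟪v, u' s⟫ = ⟪Binv v, w⟫ - ⟪Binv v, v⟫ := by
      rw [hu's, inner_sub_right, hBinvsym v w, hBinvsym v v]
    have h2 := key v w
    have hgs : g s = ⟪Binv w, w⟫ := rfl
    rw [h1, hgs] at *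
    linarith
  have hanti : AntitoneOn φ (Set.Icc 0 T) := by
    apply antitoneOn_of_deriv_nonpos (convex_Icc 0 T) hφcont
    · intro s hs
      rw [interior_Icc] at hs
      exact ((hφderiv s hs).differentiableAt).differentiableWithinAt
    · intro s hs
      rw [interior_Icc] at hs
      rw [(hφderiv s hs).deriv]
      exact hφle s hs
  intro t ht
  have h0mem : (0:ℝ) ∈ Set.Icc (0:ℝ) T := Set.mem_Icc.2 ⟨le_rfl, hT.le⟩
  have := hanti h0mem ht ht.1
  have hG0 : G 0 = 0 := intervalIntegral.integral_same
  simp only [hφ_def, hG0, mul_zero, sub_zero] at this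
  have hEt : E t = ⟪A (u t), u t⟫ := rfl
  have hE0 : E 0 = ⟪A (u 0), u 0⟫ := rfl
  have hGt : G t = ∫ θ in (0:ℝ)..t, ⟪Binv (f θ), f θ⟫ := rfl
  linarith [this]
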